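/- arXiv:0902.3436 — 2 statements merged into one kernel-verified Lean document; each statement's English description precedes it below -/
import Mathlib

section
/- Let X be a simplicial set and n ≥ 1, and suppose X is aspherical in dimension n, i.e., every morphism ∂Δ[n] → X extends along ∂Δ[n] ↪ Δ[n] to a morphism Δ[n] → X. Then for every 0 ≤ k ≤ n+1, every morphism Λ[n+1,k] → X extends along the inclusion Λ[n+1,k] ↪ ∂Δ[n+1] to a morphism ∂Δ[n+1] → X; that is, every k-horn of dimension n+1 in X can be completed to a compatible full boundary (the projection from the (n+1)-st simplicial kernel of X to the set of k-horns of dimension n+1 is surjective). -/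
open CategoryTheory Simplicial

/-- The canonical inclusion of the `k`-th horn of the `n`-th standard simplex into the
boundary of the `n`-th standard simplex. -/
def hornToBoundary (n : ℕ) (k : Fin (n + 1)) : (Λ[n, k] : SSet) ⟶ ∂Δ[n] where
  app m := TypeCat.ofHom fun α =>
    ⟨α.1, fun hsurj => α.2 (by
      apply Set.eq_univ_of_univ_subset
      intro x _
      exact Or.inl (hsurj x))⟩
  naturality _ _ _ := rfl

open SimplexCategory in
lemma my_factor_spec {n : ℕ} {x : SimplexCategory} (f : x ⟶ ⦋n+1⦌) (k : Fin (n+2))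
    (hk : k ∉ Set.range f.toOrderHom) :
    (f ≫ σ (Fin.predAbove 0 k)) ≫ δ k = f := by
  induction x using SimplexCategory.rec with
  | mk l => exact factor_δ_spec f k (fun i hi => hk ⟨i, hi⟩)

open SimplexCategory in
/-- Restriction along the `k`-th face sends `∂Δ[n]` into `Λ[n+1, k]`. -/
def boundaryToHorn (n : ℕ) (k : Fin (n+2)) : (∂Δ[n] : SSet) ⟶ Λ[n+1, k] where
  app m := TypeCat.ofHom fun α => ⟨SSet.stdSimplex.objEquiv.symm
      ((SSet.stdSimplex.objEquiv α.1) ≫ δ k), by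
    intro h
    apply α.2
    intro j
    rw [Set.eq_univ_iff_forall] at h
    rcases h (k.succAbove j) with hmem | hk
    · obtain ⟨i, hi⟩ := hmem
      exact ⟨i, Fin.succAbove_right_injective (p := k) hi⟩
    · exact absurd hk (Fin.succAbove_ne k j)⟩
  naturality _ _ _ := rfl

lemma horn_cond {n : ℕ} {k : Fin (n+2)} {m : SimplexCategoryᵒᵖ} (α : (Δ[n+1] : SSet).obj m)
    (hns : ¬ Function.Surjective (SSet.stdSimplex.asOrderHom α))
    (hk : k ∈ Set.range (SSet.stdSimplex.asOrderHom α)) :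
    Set.range (SSet.stdSimplex.asOrderHom α) ∪ {k} ≠ Set.univ := by
  intro h
  apply hns
  intro j
  have hj : j ∈ Set.range (SSet.stdSimplex.asOrderHom α) ∪ {k} := h.symm ▸ Set.mem_univ j
  rcases hj with hj | hj
  · exact hj
  · exact hj ▸ hk

open SimplexCategory in
lemma key_lemma (X : SSet.{0}) (n : ℕ) (k : Fin (n+2)) (g : (Λ[n+1, k] : SSet) ⟶ X)
    (G : Δ[n] ⟶ X) (hG : (∂Δ[n]).ι ≫ G = boundaryToHorn n k ≫ g)
    (m : SimplexCategoryᵒᵖ) (β : (Λ[n+1, k] : SSet).obj m)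
    (hk : k ∉ Set.range (SSet.stdSimplex.asOrderHom β.1)) :
    G.app m (SSet.stdSimplex.objEquiv.symm
      ((SSet.stdSimplex.objEquiv β.1) ≫ σ (Fin.predAbove 0 k))) = g.app m β := by
  set b := SSet.stdSimplex.objEquiv β.1 with hb
  have hfac : (b ≫ σ (Fin.predAbove 0 k)) ≫ δ k = b := my_factor_spec b k hk
  have hns : ¬ Function.Surjective (b ≫ σ (Fin.predAbove 0 k)).toOrderHom := by
    intro hsurj
    apply β.2
    rw [Set.eq_univ_iff_forall]
    intro j
    by_cases hj : j = k
    · exact Or.inr hj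
    · left
      obtain ⟨j', hj'⟩ : j ∈ Set.range k.succAbove := by
        rw [Fin.range_succAbove]; exact hj
      obtain ⟨i, hi⟩ := hsurj j'
      refine ⟨i, ?_⟩
      show b.toOrderHom i = j
      conv_lhs => rw [← hfac]
      show k.succAbove ((b ≫ σ (Fin.predAbove 0 k)).toOrderHom i) = j
      rw [hi, hj']
  let bc : (∂Δ[n] : SSet.{0}).obj m :=
    ⟨SSet.stdSimplex.objEquiv.symm (b ≫ σ (Fin.predAbove 0 k)), hns⟩
  have h1 := ConcreteCategory.congr_hom (congrArg (fun f => NatTrans.app f m) hG) bc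
  have h2 : (boundaryToHorn n k).app m bc = β := by
    apply Subtype.ext
    show SSet.stdSimplex.objEquiv.symm
        (SSet.stdSimplex.objEquiv bc.1 ≫ δ k) = β.1
    rw [show SSet.stdSimplex.objEquiv bc.1 = b ≫ σ (Fin.predAbove 0 k) from
      Equiv.apply_symm_apply _ _, hfac, hb]
    exact Equiv.symm_apply_apply _ _
  exact h1.trans (congrArg (g.app m) h2)

/-- If a simplicial set `X` is aspherical in dimension `n ≥ 1` (every map `∂Δ[n] ⟶ X` extends
to `Δ[n]`), then every horn `Λ[n+1, k] ⟶ X` of dimension `n+1` extends along the inclusion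
`Λ[n+1, k] ↪ ∂Δ[n+1]` to a full boundary `∂Δ[n+1] ⟶ X`. -/
theorem horn_extends_to_boundary_of_aspherical (X : SSet.{0}) (n : ℕ) (hn : 1 ≤ n)
    (hX : ∀ g : (∂Δ[n] : SSet) ⟶ X, ∃ g' : Δ[n] ⟶ X, (∂Δ[n]).ι ≫ g' = g) :
    ∀ (k : Fin (n + 2)) (g : (Λ[n + 1, k] : SSet) ⟶ X),
      ∃ g' : (∂Δ[n + 1] : SSet) ⟶ X, hornToBoundary (n + 1) k ≫ g' = g := by
  intro k g
  obtain ⟨G, hG⟩ := hX (boundaryToHorn n k ≫ g)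
  refine ⟨{
    app := fun m => TypeCat.ofHom fun α =>
      if h : k ∈ Set.range (SSet.stdSimplex.asOrderHom α.1) then
        g.app m ⟨α.1, horn_cond α.1 α.2 h⟩
      else
        G.app m (SSet.stdSimplex.objEquiv.symm
          ((SSet.stdSimplex.objEquiv α.1) ≫ SimplexCategory.σ (Fin.predAbove 0 k)))
    naturality := ?_ }, ?_⟩
  · intro m m' θ
    ext α
    by_cases h : k ∈ Set.range (SSet.stdSimplex.asOrderHom α.1)
    · by_cases h' : k ∈ Set.range (SSet.stdSimplex.asOrderHom ((∂Δ[n+1] : SSet.{0}).map θ α).1)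
      · show dite _ _ _ = _
        erw [dif_pos h']
        show _ = (fun a => X.map θ a) (dite _ _ _)
        erw [dif_pos h]
        exact ConcreteCategory.congr_hom (g.naturality θ) ⟨α.1, horn_cond α.1 α.2 h⟩
      · show dite _ _ _ = _
        erw [dif_neg h']
        show _ = (fun a => X.map θ a) (dite _ _ _)
        erw [dif_pos h]
        exact (key_lemma X n k g G hG m'
            ((Λ[n+1, k] : SSet.{0}).map θ ⟨α.1, horn_cond α.1 α.2 h⟩) h').trans
          (ConcreteCategory.congr_hom (g.naturality θ) ⟨α.1, horn_cond α.1 α.2 h⟩)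
    · have h' : k ∉ Set.range (SSet.stdSimplex.asOrderHom ((∂Δ[n+1] : SSet.{0}).map θ α).1) := by
        rintro ⟨i, hi⟩
        exact h ⟨θ.unop.toOrderHom i, hi⟩
      show dite _ _ _ = _
      erw [dif_neg h']
      show _ = (fun a => X.map θ a) (dite _ _ _)
      erw [dif_neg h]
      exact ConcreteCategory.congr_hom (G.naturality θ)
        (SSet.stdSimplex.objEquiv.symm
          ((SSet.stdSimplex.objEquiv α.1) ≫ SimplexCategory.σ (Fin.predAbove 0 k)))
  · apply SSet.hom_ext
    intro m
    ext β
    show dite _ _ _ = _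
    simp only [hornToBoundary]
    by_cases h : k ∈ Set.range (SSet.stdSimplex.asOrderHom β.1)
    · erw [dif_pos h]
      exact congrArg (g.app m) (Subtype.ext rfl)
    · erw [dif_neg h]
      exact key_lemma X n k g G hG m β h
end

section
/- Every aspherical augmented simplicial set is split: let X be an augmented simplicial set, i.e., a simplicial set X• together with a set X₋₁ and an augmentation map p : X₀ → X₋₁ with p ∘ d₀ = p ∘ d₁ : X₁ → X₋₁. Suppose that (i) p : X₀ → X₋₁ is surjective, (ii) the map (d₀,d₁) : X₁ → X₀ ×_{X₋₁} X₀ into the fiber product over X₋₁ is surjective, and (iii) for every n ≥ 2 the boundary map X_n → K_n(X), x ↦ (d₀(x),…,d_n(x)), to the n-th simplicial kernel is surjective. Then X admits a contraction (extra degeneracy): there exist maps s : X₋₁ → X₀ and, for each n ≥ 0, maps X_n → X_{n+1} which together with the structure maps of X satisfy all the simplicial identities involving degeneracies (so that X becomes a split augmented simplicial set). -/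
open CategoryTheory Simplicial Opposite

universe u

namespace AugSplitAux

section Identities

variable (X : CategoryTheory.SimplicialObject (Type u))

lemma dd {n : ℕ} (a b : ℕ) (hab : a < b) (hb : b ≤ n + 2) (y : X _⦋n + 2⦌) :
    X.δ (⟨a, Nat.lt_of_lt_of_le hab hb⟩ : Fin (n + 2)) (X.δ (⟨b, Nat.lt_succ_of_le hb⟩ : Fin (n + 3)) y) =
      X.δ (⟨b - 1, Nat.lt_of_lt_of_le (Nat.sub_lt (Nat.lt_of_le_of_lt (Nat.zero_le _) hab) Nat.one_pos) hb⟩ : Fin (n + 2))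
        (X.δ (⟨a, Nat.lt_of_lt_of_le hab (Nat.le_succ_of_le hb)⟩ : Fin (n + 3)) y) := by
  have e1 : (⟨b, by omega⟩ : Fin (n + 3)) = Fin.succ ⟨b - 1, by omega⟩ := by
    ext; simp; omega
  have e2 : (⟨a, by omega⟩ : Fin (n + 3)) = Fin.castSucc ⟨a, by omega⟩ := by
    ext; simp
  rw [e1, e2]
  have H : (⟨a, by omega⟩ : Fin (n + 2)) ≤ ⟨b - 1, by omega⟩ := by
    simp [Fin.le_def]; omega
  exact ConcreteCategory.congr_hom (X.δ_comp_δ H) y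

lemma ds_lt {n : ℕ} (i j : ℕ) (hij : i < j) (hj : j ≤ n + 1) (x : X _⦋n + 1⦌) :
    X.δ (⟨i, by omega⟩ : Fin (n + 3)) (X.σ (⟨j, by omega⟩ : Fin (n + 2)) x) =
      X.σ (⟨j - 1, by omega⟩ : Fin (n + 1)) (X.δ (⟨i, by omega⟩ : Fin (n + 2)) x) := by
  have e1 : (⟨j, by omega⟩ : Fin (n + 2)) = Fin.succ ⟨j - 1, by omega⟩ := by
    ext; simp; omega
  have e2 : (⟨i, by omega⟩ : Fin (n + 3)) = Fin.castSucc ⟨i, by omega⟩ := by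
    ext; simp
  rw [e1, e2]
  have H : (⟨i, by omega⟩ : Fin (n + 2)) ≤ Fin.castSucc ⟨j - 1, by omega⟩ := by
    simp [Fin.le_def]; omega
  exact ConcreteCategory.congr_hom (X.δ_comp_σ_of_le H) x

lemma ds_self {n : ℕ} (i j : ℕ) (hij : i = j ∨ i = j + 1) (hj : j ≤ n) (x : X _⦋n⦌) :
    X.δ (⟨i, by omega⟩ : Fin (n + 2)) (X.σ (⟨j, by omega⟩ : Fin (n + 1)) x) = x := by
  rcases hij with h | h
  · exact ConcreteCategory.congr_hom (X.δ_comp_σ_self' (i := ⟨j, by omega⟩) (j := ⟨i, by omega⟩) (by ext; simp; omega)) x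
  · exact ConcreteCategory.congr_hom (X.δ_comp_σ_succ' (i := ⟨j, by omega⟩) (j := ⟨i, by omega⟩) (by ext; simp; omega)) x

lemma ds_gt {n : ℕ} (i j : ℕ) (hij : j + 1 < i) (hi : i ≤ n + 2) (x : X _⦋n + 1⦌) :
    X.δ (⟨i, by omega⟩ : Fin (n + 3)) (X.σ (⟨j, by omega⟩ : Fin (n + 2)) x) =
      X.σ (⟨j, by omega⟩ : Fin (n + 1)) (X.δ (⟨i - 1, by omega⟩ : Fin (n + 2)) x) := by
  have e1 : (⟨i, by omega⟩ : Fin (n + 3)) = Fin.succ ⟨i - 1, by omega⟩ := by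
    ext; simp; omega
  have e2 : (⟨j, by omega⟩ : Fin (n + 2)) = Fin.castSucc ⟨j, by omega⟩ := by
    ext; simp
  rw [e1, e2]
  have H : Fin.castSucc (⟨j, by omega⟩ : Fin (n + 1)) < ⟨i - 1, by omega⟩ := by
    simp [Fin.lt_def]; omega
  exact ConcreteCategory.congr_hom (X.δ_comp_σ_of_gt H) x

lemma ss {n : ℕ} (i j : ℕ) (hij : i ≤ j) (hj : j ≤ n) (x : X _⦋n⦌) :
    X.σ (⟨i, by omega⟩ : Fin (n + 2)) (X.σ (⟨j, by omega⟩ : Fin (n + 1)) x) =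
      X.σ (⟨j + 1, by omega⟩ : Fin (n + 2)) (X.σ (⟨i, by omega⟩ : Fin (n + 1)) x) := by
  have e1 : (⟨i, by omega⟩ : Fin (n + 2)) = Fin.castSucc ⟨i, by omega⟩ := by
    ext; simp
  have e2 : (⟨j + 1, by omega⟩ : Fin (n + 2)) = Fin.succ ⟨j, by omega⟩ := by
    ext; simp
  rw [e1, e2]
  have H : (⟨i, by omega⟩ : Fin (n + 1)) ≤ ⟨j, by omega⟩ := by
    simp [Fin.le_def]; omega
  exact ConcreteCategory.congr_hom (X.σ_comp_σ H) x

lemma σ_inj {n : ℕ} (i : Fin (n + 1)) : Function.Injective (X.σ i) := by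
  intro x y h
  have h2 := congr_arg (X.δ (Fin.castSucc i)) h
  rwa [show X.δ (Fin.castSucc i) (X.σ i x) = x from ConcreteCategory.congr_hom (X.δ_comp_σ_self (i := i)) x,
    show X.δ (Fin.castSucc i) (X.σ i y) = y from ConcreteCategory.congr_hom (X.δ_comp_σ_self (i := i)) y] at h2

end Identities

variable (A : CategoryTheory.SimplicialObject.Augmented (Type u))

/-- the augmentation, elementwise -/
abbrev aug (x : A.left _⦋0⦌) : A.right := A.hom.app (op (SimplexCategory.mk 0)) x

variable (h0 : Function.Surjective (A.hom.app (op (SimplexCategory.mk 0))))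
  (h1 : ∀ a b : A.left _⦋0⦌,
      A.hom.app (op (SimplexCategory.mk 0)) a = A.hom.app (op (SimplexCategory.mk 0)) b →
      ∃ x : A.left _⦋1⦌, A.left.δ 0 x = a ∧ A.left.δ 1 x = b)
  (h2 : ∀ (n : ℕ) (x : Fin (n + 3) → A.left _⦋n + 1⦌),
      (∀ (i j : ℕ) (hij : i < j) (hj : j ≤ n + 2),
        A.left.δ ⟨i, Nat.lt_of_lt_of_le hij hj⟩ (x ⟨j, Nat.lt_succ_of_le hj⟩) =
          A.left.δ ⟨j - 1, Nat.lt_of_lt_of_le (Nat.sub_lt (Nat.lt_of_le_of_lt (Nat.zero_le i) hij)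
            Nat.one_pos) hj⟩ (x ⟨i, Nat.lt_of_lt_of_le hij (Nat.le_succ_of_le hj)⟩)) →
      ∃ y : A.left _⦋n + 2⦌, ∀ i : Fin (n + 3), A.left.δ i y = x i)

/-- section of the augmentation -/
noncomputable def sm1 (a : A.right) : A.left _⦋0⦌ := (h0 a).choose

lemma sm1_spec (a : A.right) : aug A (sm1 A h0 a) = a := (h0 a).choose_spec

lemma aug_d (i : Fin 2) (z : A.left _⦋1⦌) :
    aug A (A.left.δ i z) = A.hom.app (op (SimplexCategory.mk 1)) z := by
  have := ConcreteCategory.congr_hom (SimplicialObject.δ_naturality A.hom i) z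
  exact this

/-- the candidate tuple of faces for the filler of `y` -/
def tup {n : ℕ} (f : A.left _⦋n⦌ → A.left _⦋n + 1⦌) (y : A.left _⦋n + 1⦌) :
    Fin (n + 3) → A.left _⦋n + 1⦌ :=
  Fin.cases y (fun k => f (A.left.δ k y))

lemma tup_zero {n : ℕ} (f : A.left _⦋n⦌ → A.left _⦋n + 1⦌) (y : A.left _⦋n + 1⦌)
    (h : (0 : ℕ) < n + 3) : tup A f y ⟨0, h⟩ = y := by
  rw [show (⟨0, h⟩ : Fin (n + 3)) = 0 from rfl]
  simp [tup]

lemma tup_succ {n : ℕ} (f : A.left _⦋n⦌ → A.left _⦋n + 1⦌) (y : A.left _⦋n + 1⦌)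
    (j : ℕ) (h : j + 1 < n + 3) :
    tup A f y ⟨j + 1, h⟩ = f (A.left.δ (⟨j, by omega⟩ : Fin (n + 2)) y) := by
  rw [show (⟨j + 1, h⟩ : Fin (n + 3)) = Fin.succ ⟨j, by omega⟩ from rfl]
  simp [tup]

/-- compatibility condition, in the exact shape used by `h2` -/
def compat {n : ℕ} (f : A.left _⦋n⦌ → A.left _⦋n + 1⦌) (y : A.left _⦋n + 1⦌) : Prop :=
  ∀ (i j : ℕ) (hij : i < j) (hj : j ≤ n + 2),
    A.left.δ ⟨i, Nat.lt_of_lt_of_le hij hj⟩ (tup A f y ⟨j, Nat.lt_succ_of_le hj⟩) =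
      A.left.δ ⟨j - 1, Nat.lt_of_lt_of_le (Nat.sub_lt (Nat.lt_of_le_of_lt (Nat.zero_le _) hij) Nat.one_pos) hj⟩
        (tup A f y ⟨i, Nat.lt_of_lt_of_le hij (Nat.le_succ_of_le hj)⟩)

attribute [local instance] Classical.propDecidable

/-- the contraction, constructed by recursion with choices -/
noncomputable def contr : ∀ n : ℕ, A.left _⦋n⦌ → A.left _⦋n + 1⦌ := fun n => match n with
  | 0 => fun x =>
      (h1 x (sm1 A h0 (aug A x)) ((sm1_spec A h0 _).symm)).choose
  | (n + 1) => fun y =>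
      if hd : ∃ (i : Fin (n + 1)) (x : A.left _⦋n⦌), A.left.σ i x = y then
        A.left.σ (Fin.succ hd.choose) (contr n hd.choose_spec.choose)
      else if hc : compat A (contr n) y then
        (h2 n (tup A (contr n) y) hc).choose
      else A.left.σ 0 y

lemma contr_zero_d0 (x : A.left _⦋0⦌) : A.left.δ 0 (contr A h0 h1 h2 0 x) = x :=
  (h1 x (sm1 A h0 (aug A x)) ((sm1_spec A h0 _).symm)).choose_spec.1

lemma contr_zero_d1 (x : A.left _⦋0⦌) :
    A.left.δ 1 (contr A h0 h1 h2 0 x) = sm1 A h0 (aug A x) :=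
  (h1 x (sm1 A h0 (aug A x)) ((sm1_spec A h0 _).symm)).choose_spec.2

/-- first property: `δ 0 ∘ s n = id` -/
def DProp (n : ℕ) : Prop :=
  ∀ y : A.left _⦋n⦌, A.left.δ 0 (contr A h0 h1 h2 n y) = y

/-- higher face properties -/
def HProp : ℕ → Prop := fun n => match n with
  | 0 => True
  | (n + 1) => ∀ (k : Fin (n + 2)) (y : A.left _⦋n + 1⦌),
      A.left.δ (Fin.succ k) (contr A h0 h1 h2 (n + 1) y) =
        contr A h0 h1 h2 n (A.left.δ k y)

/-- degeneracy compatibility -/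
def SProp (n : ℕ) : Prop :=
  ∀ (i : Fin (n + 1)) (x : A.left _⦋n⦌),
    contr A h0 h1 h2 (n + 1) (A.left.σ i x) =
      A.left.σ (Fin.succ i) (contr A h0 h1 h2 n x)

lemma compat_holds (n : ℕ) (hD : DProp A h0 h1 h2 n) (hH : HProp A h0 h1 h2 n)
    (y : A.left _⦋n + 1⦌) : compat A (contr A h0 h1 h2 n) y := by
  intro i j hij hj
  obtain ⟨j', rfl⟩ : ∃ j', j = j' + 1 := ⟨j - 1, by omega⟩
  simp only [Nat.add_sub_cancel]
  rw [tup_succ]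
  rcases Nat.eq_zero_or_pos i with hi | hi
  · subst hi
    rw [tup_zero]
    rw [show (⟨0, by omega⟩ : Fin (n + 2)) = 0 from rfl]
    exact hD _
  · obtain ⟨i', rfl⟩ : ∃ i', i = i' + 1 := ⟨i - 1, by omega⟩
    rw [tup_succ]
    match n, hj with
    | 0, hj =>
      -- i' = 0, j' = 1
      obtain rfl : i' = 0 := by omega
      obtain rfl : j' = 1 := by omega
      rw [show (⟨0 + 1, by omega⟩ : Fin 2) = 1 from rfl,
        contr_zero_d1, contr_zero_d1]
      congr 1
      rw [show (⟨0, by omega⟩ : Fin 2) = 0 from rfl, aug_d, aug_d]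
    | (m + 1), hj =>
      obtain ⟨j'', rfl⟩ : ∃ j'', j' = j'' + 1 := ⟨j' - 1, by omega⟩
      rw [show (⟨i' + 1, by omega⟩ : Fin (m + 3)) = Fin.succ ⟨i', by omega⟩ from rfl, hH,
        show (⟨j'' + 1, by omega⟩ : Fin (m + 3)) = Fin.succ ⟨j'', by omega⟩ from rfl, hH]
      congr 1
      have := dd A.left i' (j'' + 1) (by omega) (by omega) y
      simp only [Nat.add_sub_cancel] at this
      exact this

lemma wd_le (n : ℕ) (IHS : ∀ m, m + 1 = n → SProp A h0 h1 h2 m)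
    (i j : Fin (n + 1)) (hij : i ≤ j) (z x : A.left _⦋n⦌)
    (h : A.left.σ i z = A.left.σ j x) :
    A.left.σ (Fin.succ i) (contr A h0 h1 h2 n z) =
      A.left.σ (Fin.succ j) (contr A h0 h1 h2 n x) := by
  rcases eq_or_lt_of_le hij with heq | hlt
  · subst heq
    rw [σ_inj A.left i h]
  · obtain ⟨m, rfl⟩ : ∃ m, n = m + 1 := ⟨n - 1, by
      have := j.2; have := Fin.lt_def.mp hlt; omega⟩
    obtain ⟨iv, hivlt⟩ := i
    obtain ⟨jv, hjvlt⟩ := j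
    have hiv : iv < jv := Fin.lt_def.mp hlt
    have hjv : jv ≤ m + 1 := by omega
    -- z = σ_{jv-1} (δ_iv x)
    have hz : z = A.left.σ (⟨jv - 1, by omega⟩ : Fin (m + 1))
        (A.left.δ (⟨iv, by omega⟩ : Fin (m + 2)) x) := by
      have e1 := ds_self A.left iv iv (Or.inl rfl) (by omega) z
      have e2 := ds_lt A.left iv jv hiv (by omega) x
      rw [← e1, show (⟨iv, by omega⟩ : Fin (m + 2)) = ⟨iv, hivlt⟩ from rfl, h, e2]
    -- x = σ_iv (δ_jv z)
    have hx : x = A.left.σ (⟨iv, by omega⟩ : Fin (m + 1))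
        (A.left.δ (⟨jv, by omega⟩ : Fin (m + 2)) z) := by
      have e3 := ds_self A.left (jv + 1) jv (Or.inr rfl) (by omega) x
      have e4 := ds_gt A.left (jv + 1) iv (by omega) (by omega) z
      simp only [Nat.add_sub_cancel] at e4
      rw [← e3, show (⟨jv, by omega⟩ : Fin (m + 2)) = ⟨jv, hjvlt⟩ from rfl, ← h, e4]
    set w : A.left _⦋m⦌ := A.left.δ (⟨jv, by omega⟩ : Fin (m + 2)) z with hw
    set w' : A.left _⦋m⦌ := A.left.δ (⟨iv, by omega⟩ : Fin (m + 2)) x with hw'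
    -- w' = w
    have hww : w' = w := by
      have c1 : A.left.σ (⟨iv, hivlt⟩ : Fin (m + 2)) z =
          A.left.σ (⟨jv, hjvlt⟩ : Fin (m + 2)) (A.left.σ (⟨iv, by omega⟩ : Fin (m + 1)) w') := by
        conv_lhs => rw [hz]
        have e5 := ss A.left iv (jv - 1) (by omega) (by omega) w'
        rw [e5, show (⟨jv - 1 + 1, by omega⟩ : Fin (m + 2)) = ⟨jv, hjvlt⟩ by ext; simp; omega]
      have c2 : A.left.σ (⟨iv, hivlt⟩ : Fin (m + 2)) z =
          A.left.σ (⟨jv, hjvlt⟩ : Fin (m + 2)) (A.left.σ (⟨iv, by omega⟩ : Fin (m + 1)) w) := by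
        rw [h]
        conv_lhs => rw [hx]
      exact σ_inj A.left _ (σ_inj A.left _ (c1.symm.trans c2))
    have hz' : z = A.left.σ (⟨jv - 1, by omega⟩ : Fin (m + 1)) w := by rw [hz, hww]
    rw [hz', hx, IHS m rfl, IHS m rfl,
      show Fin.succ (⟨jv - 1, by omega⟩ : Fin (m + 1)) = (⟨jv - 1 + 1, by omega⟩ : Fin (m + 2))
        from rfl,
      show (⟨jv - 1 + 1, by omega⟩ : Fin (m + 2)) = ⟨jv, by omega⟩ by ext; simp; omega]
    have e7 := ss A.left (iv + 1) jv (by omega) (by omega) (contr A h0 h1 h2 m w)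
    exact e7

lemma sprop_step (n : ℕ) (IHS : ∀ m, m + 1 = n → SProp A h0 h1 h2 m) :
    SProp A h0 h1 h2 n := by
  intro i x
  have hd : ∃ (j : Fin (n + 1)) (z : A.left _⦋n⦌), A.left.σ j z = A.left.σ i x := ⟨i, x, rfl⟩
  simp only [contr]
  rw [dif_pos hd]
  have hspec : A.left.σ hd.choose hd.choose_spec.choose = A.left.σ i x :=
    hd.choose_spec.choose_spec
  rcases le_total hd.choose i with hle | hle
  · exact wd_le A h0 h1 h2 n IHS hd.choose i hle _ x hspec
  · exact (wd_le A h0 h1 h2 n IHS i hd.choose hle x _ hspec.symm).symm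

lemma d_step (m : ℕ) (hDm : DProp A h0 h1 h2 m) (hHm : HProp A h0 h1 h2 m)
    (hSm : SProp A h0 h1 h2 m) : DProp A h0 h1 h2 (m + 1) := by
  have hDm' : ∀ y : A.left _⦋m⦌, A.left.δ 0 (contr A h0 h1 h2 m y) = y := hDm
  have hSm' : ∀ (i : Fin (m + 1)) (x : A.left _⦋m⦌),
      contr A h0 h1 h2 (m + 1) (A.left.σ i x) =
        A.left.σ (Fin.succ i) (contr A h0 h1 h2 m x) := hSm
  intro y
  by_cases hd : ∃ (i : Fin (m + 1)) (x : A.left _⦋m⦌), A.left.σ i x = y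
  · obtain ⟨i, x, rfl⟩ := hd
    obtain ⟨iv, hivlt⟩ := i
    rw [hSm']
    have e := ds_lt A.left 0 (iv + 1) (by omega) (by omega) (contr A h0 h1 h2 m x)
    simp only [Nat.add_sub_cancel] at e
    rw [show (0 : Fin (m + 3)) = ⟨0, by omega⟩ from rfl,
      show Fin.succ (⟨iv, hivlt⟩ : Fin (m + 1)) = (⟨iv + 1, by omega⟩ : Fin (m + 2)) from rfl,
      e, show (⟨0, by omega⟩ : Fin (m + 2)) = 0 from rfl, hDm']
  · have hc := compat_holds A h0 h1 h2 m hDm hHm y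
    simp only [contr]
    rw [dif_neg hd, dif_pos hc]
    have spec := (h2 m (tup A (contr A h0 h1 h2 m) y) hc).choose_spec 0
    rw [spec, show (0 : Fin (m + 3)) = ⟨0, by omega⟩ from rfl, tup_zero]

lemma h_step (m : ℕ) (hDm : DProp A h0 h1 h2 m) (hHm : HProp A h0 h1 h2 m)
    (hSm : SProp A h0 h1 h2 m)
    (hS' : ∀ m', m' + 1 = m → SProp A h0 h1 h2 m') : HProp A h0 h1 h2 (m + 1) := by
  have hSm' : ∀ (i : Fin (m + 1)) (x : A.left _⦋m⦌),
      contr A h0 h1 h2 (m + 1) (A.left.σ i x) =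
        A.left.σ (Fin.succ i) (contr A h0 h1 h2 m x) := hSm
  intro k y
  obtain ⟨kv, hkvlt⟩ := k
  by_cases hd : ∃ (i : Fin (m + 1)) (x : A.left _⦋m⦌), A.left.σ i x = y
  · obtain ⟨i, x, rfl⟩ := hd
    obtain ⟨iv, hivlt⟩ := i
    rw [hSm',
      show Fin.succ (⟨kv, hkvlt⟩ : Fin (m + 2)) = (⟨kv + 1, by omega⟩ : Fin (m + 3)) from rfl,
      show Fin.succ (⟨iv, hivlt⟩ : Fin (m + 1)) = (⟨iv + 1, by omega⟩ : Fin (m + 2)) from rfl]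
    rcases Nat.lt_or_ge kv iv with hki | hki
    · -- kv < iv
      obtain ⟨m', rfl⟩ : ∃ m', m = m' + 1 := ⟨m - 1, by omega⟩
      have hHm' : ∀ (k : Fin (m' + 2)) (w : A.left _⦋m' + 1⦌),
          A.left.δ (Fin.succ k) (contr A h0 h1 h2 (m' + 1) w) =
            contr A h0 h1 h2 m' (A.left.δ k w) := hHm
      have e1 := ds_lt A.left (kv + 1) (iv + 1) (by omega) (by omega)
        (contr A h0 h1 h2 (m' + 1) x)
      simp only [Nat.add_sub_cancel] at e1
      rw [e1, show (⟨kv + 1, by omega⟩ : Fin (m' + 3)) = Fin.succ ⟨kv, by omega⟩ from rfl, hHm']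
      have e2 := ds_lt A.left kv iv hki (by omega) x
      rw [e2, hS' m' rfl,
        show Fin.succ (⟨iv - 1, by omega⟩ : Fin (m' + 1)) = (⟨iv, by omega⟩ : Fin (m' + 2)) by
          ext; simp; omega]
    rcases Nat.lt_or_ge (iv + 1) kv with hki2 | hki2
    · -- iv + 1 < kv
      obtain ⟨m', rfl⟩ : ∃ m', m = m' + 1 := ⟨m - 1, by omega⟩
      have hHm' : ∀ (k : Fin (m' + 2)) (w : A.left _⦋m' + 1⦌),
          A.left.δ (Fin.succ k) (contr A h0 h1 h2 (m' + 1) w) =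
            contr A h0 h1 h2 m' (A.left.δ k w) := hHm
      have e1 := ds_gt A.left (kv + 1) (iv + 1) (by omega) (by omega)
        (contr A h0 h1 h2 (m' + 1) x)
      simp only [Nat.add_sub_cancel] at e1
      have e2 := ds_gt A.left kv iv (by omega) (by omega) x
      rw [e1, e2, hS' m' rfl,
        show (⟨kv, by omega⟩ : Fin (m' + 3)) = Fin.succ ⟨kv - 1, by omega⟩ by
          ext; simp; omega, hHm']
      rfl
    · -- iv ≤ kv ≤ iv + 1
      have e1 := ds_self A.left (kv + 1) (iv + 1) (by omega) (by omega)
        (contr A h0 h1 h2 m x)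
      rw [e1]
      have e2 := ds_self A.left kv iv (by omega) (by omega) x
      rw [e2]
  · have hc := compat_holds A h0 h1 h2 m hDm hHm y
    simp only [contr]
    rw [dif_neg hd, dif_pos hc]
    have spec := (h2 m (tup A (contr A h0 h1 h2 m) y) hc).choose_spec
      (Fin.succ ⟨kv, hkvlt⟩)
    rw [spec, show Fin.succ (⟨kv, hkvlt⟩ : Fin (m + 2)) = (⟨kv + 1, by omega⟩ : Fin (m + 3))
      from rfl, tup_succ]

theorem all_props (n : ℕ) :
    DProp A h0 h1 h2 n ∧ HProp A h0 h1 h2 n ∧ SProp A h0 h1 h2 n := by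
  induction n using Nat.strong_induction_on with
  | _ n IH =>
    match n with
    | 0 =>
      exact ⟨fun x => contr_zero_d0 A h0 h1 h2 x, trivial,
        sprop_step A h0 h1 h2 0 (fun m h => by omega)⟩
    | (m + 1) =>
      obtain ⟨hD, hH, hS⟩ := IH m (by omega)
      have hS' : ∀ m', m' + 1 = m → SProp A h0 h1 h2 m' := fun m' h => by
        have h' : m' < m + 1 := by omega
        exact (IH m' h').2.2
      refine ⟨d_step A h0 h1 h2 m hD hH hS, h_step A h0 h1 h2 m hD hH hS hS', ?_⟩
      refine sprop_step A h0 h1 h2 (m + 1) (fun m' h => ?_)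
      have : m' = m := by omega
      subst this
      exact hS

end AugSplitAux

/-- Every aspherical augmented simplicial set is split: if `A` is an augmented simplicial set
(an augmented simplicial object in `Type u`) such that
(i) the augmentation `p : X₀ → X₋₁` is surjective,
(ii) the map `(d₀, d₁) : X₁ → X₀ ×_{X₋₁} X₀` to the fiber product over the augmentation is
surjective, and
(iii) for every `n ≥ 2` the boundary map `X_n → K_n(X)` to the `n`-th simplicial kernel is
surjective,
then `A` admits a contraction (an extra degeneracy). -/
theorem augmented_aspherical_is_split (A : CategoryTheory.SimplicialObject.Augmented (Type u))
    (h0 : Function.Surjective (A.hom.app (op (SimplexCategory.mk 0))))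
    (h1 : ∀ a b : A.left _⦋0⦌,
      A.hom.app (op (SimplexCategory.mk 0)) a = A.hom.app (op (SimplexCategory.mk 0)) b →
      ∃ x : A.left _⦋1⦌, A.left.δ 0 x = a ∧ A.left.δ 1 x = b)
    (h2 : ∀ (n : ℕ) (x : Fin (n + 3) → A.left _⦋n + 1⦌),
      (∀ (i j : ℕ) (hij : i < j) (hj : j ≤ n + 2),
        A.left.δ ⟨i, by omega⟩ (x ⟨j, by omega⟩) = A.left.δ ⟨j - 1, by omega⟩ (x ⟨i, by omega⟩)) →
      ∃ y : A.left _⦋n + 2⦌, ∀ i : Fin (n + 3), A.left.δ i y = x i) :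
    Nonempty (SimplicialObject.Augmented.ExtraDegeneracy A) := by
  constructor
  exact
    { s' := TypeCat.ofHom (AugSplitAux.sm1 A h0)
      s := fun n => TypeCat.ofHom (AugSplitAux.contr A h0 h1 h2 n)
      s'_comp_ε := by
        ext a
        exact AugSplitAux.sm1_spec A h0 a
      s₀_comp_δ₁ := by
        ext x
        exact AugSplitAux.contr_zero_d1 A h0 h1 h2 x
      s_comp_δ₀ := by
        intro n
        ext y
        exact (AugSplitAux.all_props A h0 h1 h2 n).1 y
      s_comp_δ := by
        intro n i
        ext y
        exact (AugSplitAux.all_props A h0 h1 h2 (n + 1)).2.1 i y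
      s_comp_σ := by
        intro n i
        ext x
        exact ((AugSplitAux.all_props A h0 h1 h2 n).2.2 i x).symm }
end
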